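/- For n ≥ 3 agents, a 1-out-of-n MMS allocation of chores need not satisfy envy-freeness-up-to-c chores nor proportionality-up-to-c chores, for any constant c ≥ 1. Concretely, with k = 3c+3: one chore of value -k and k chores of value -1, all agents identical; the allocation giving agent 1 the hard chore, agent 2 all k easy chores, and others nothing satisfies MMS^n (each agent's value ≥ -k = MMS^n), but agent 2 envies agent 3 even after removing k-1 > c chores from agent 2's bundle, and agent 2's value is below the proportional share -2k/n even after removing c chores. -/

import Mathlib

open Finset

/-- The 1-out-of-`d` maximin share of an agent with additive valuation `v`
over `m` items: the maximum over partitions of the items into `d` bundles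
of the minimum bundle value. -/
noncomputable def MMS {m : ℕ} (d : ℕ) (v : Fin m → ℝ) : ℝ :=
  ⨆ P : Fin m → Fin d, ⨅ j : Fin d, ∑ i ∈ Finset.univ.filter (fun i => P i = j), v i

/-- A 1-out-of-`n` MMS allocation need not satisfy envy-freeness-up-to-`c` nor
proportionality-up-to-`c`: with `k = 3c+3`, one chore of value `-k` and `k` chores
of value `-1`, the allocation giving agent 0 the hard chore, agent 1 all easy
chores, and the rest nothing, satisfies `MMS^n` for every agent, but agent 1
envies agent 2 even after removing any `c` chores, and agent 1's value is below
the proportional share even after removing any `c` chores. -/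
theorem stmt9 (n c : ℕ) (hn : 3 ≤ n) (hc : 1 ≤ c) :
    let k := 3 * c + 3
    let v : Fin (k + 1) → ℝ := fun i => if i.val = 0 then -(k : ℝ) else -1
    let A : Fin (k + 1) → Fin n := fun i =>
      if i.val = 0 then ⟨0, by omega⟩ else ⟨1, by omega⟩
    let bundle : Fin n → Finset (Fin (k + 1)) := fun j =>
      Finset.univ.filter (fun i => A i = j)
    (∀ j : Fin n, MMS n v ≤ ∑ i ∈ bundle j, v i) ∧
    (∀ S ⊆ bundle ⟨1, by omega⟩, S.card ≤ c →
      ∑ i ∈ bundle ⟨1, by omega⟩ \ S, v i < ∑ i ∈ bundle ⟨2, by omega⟩, v i) ∧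
    (∀ S ⊆ bundle ⟨1, by omega⟩, S.card ≤ c →
      ∑ i ∈ bundle ⟨1, by omega⟩ \ S, v i < (∑ i, v i) / (n : ℝ)) := by
  intro k v A bundle
  have hk : k = 3 * c + 3 := rfl
  have hv : ∀ i, v i ≤ 0 := by
    intro i
    show (if (i:ℕ) = 0 then -(k:ℝ) else -1) ≤ 0
    split
    · simp
    · norm_num
  have hv0 : v 0 = -(k : ℝ) := by unfold v; simp
  have hvne : ∀ i : Fin (k+1), i.val ≠ 0 → v i = -1 := by
    intro i hi; unfold v; simp [hi]
  have hb1 : ∀ j : Fin n, j.val = 1 →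
      bundle j = univ.filter (fun i : Fin (k+1) => i.val ≠ 0) := by
    intro j hj
    ext i
    unfold bundle A
    simp only [mem_filter, mem_univ, true_and]
    constructor
    · intro h hi
      rw [if_pos hi] at h
      rw [Fin.ext_iff, hj] at h
      simp at h
    · intro h
      rw [if_neg h, Fin.ext_iff, hj]
  have hcard : (univ.filter (fun i : Fin (k+1) => i.val ≠ 0)).card = k := by
    have he : (univ.filter (fun i : Fin (k+1) => i.val ≠ 0)) = univ.erase 0 := by
      ext i
      simp only [mem_filter, mem_univ, true_and, mem_erase, and_true, ne_eq, Fin.ext_iff, Fin.val_zero]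
    rw [he, card_erase_of_mem (mem_univ _), card_univ, Fintype.card_fin]
    omega
  have hsumne : ∑ i ∈ univ.filter (fun i : Fin (k+1) => i.val ≠ 0), v i = -(k : ℝ) := by
    have h1 : ∀ i ∈ univ.filter (fun i : Fin (k+1) => i.val ≠ 0), v i = -1 := by
      intro i hi
      simp only [mem_filter] at hi
      exact hvne i hi.2
    rw [Finset.sum_congr rfl h1, Finset.sum_const, hcard, nsmul_eq_mul]
    ring
  have hb0 : ∀ j : Fin n, j.val = 0 → bundle j = {(0 : Fin (k+1))} := by
    intro j hj
    ext i
    unfold bundle A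
    simp only [mem_filter, mem_univ, true_and, mem_singleton]
    constructor
    · intro h
      by_cases hi : i.val = 0
      · exact Fin.ext hi
      · rw [if_neg hi, Fin.ext_iff, hj] at h
        simp at h
    · intro h
      subst h
      rw [if_pos (by simp : ((0:Fin (k+1)):ℕ) = 0)]
      exact Fin.ext (by simp [hj])
  have hbother : ∀ j : Fin n, j.val ≠ 0 → j.val ≠ 1 → bundle j = ∅ := by
    intro j h0 h1
    ext i
    unfold bundle A
    simp only [mem_filter, mem_univ, true_and, notMem_empty, iff_false]
    split
    · intro h; exact h0 (by rw [← h])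
    · intro h; exact h1 (by rw [← h])
  have hsumdiff : ∀ S ⊆ bundle ⟨1, by omega⟩,
      ∑ i ∈ bundle ⟨1, by omega⟩ \ S, v i = -(((k - S.card : ℕ)) : ℝ) := by
    intro S hS
    have hsub : bundle ⟨1, by omega⟩ \ S ⊆ bundle ⟨1, by omega⟩ := sdiff_subset
    have h1 : ∀ i ∈ bundle ⟨1, by omega⟩ \ S, v i = -1 := by
      intro i hi
      have h2 := hsub hi
      rw [hb1 _ rfl] at h2
      simp only [mem_filter] at h2
      exact hvne i h2.2
    have hc1 : (bundle ⟨1, by omega⟩ \ S).card = k - S.card := by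
      rw [card_sdiff_of_subset hS, hb1 _ rfl, hcard]
    rw [Finset.sum_congr rfl h1, Finset.sum_const, hc1, nsmul_eq_mul]
    ring
  have hMMS : MMS n v ≤ -(k : ℝ) := by
    have hne : Nonempty (Fin n) := ⟨⟨0, by omega⟩⟩
    apply ciSup_le
    intro P
    have hbdd : BddBelow (Set.range fun j : Fin n =>
        ∑ i ∈ univ.filter (fun i => P i = j), v i) :=
      (Set.finite_range _).bddBelow
    refine le_trans (ciInf_le hbdd (P 0)) ?_
    have h0mem : (0 : Fin (k+1)) ∈ univ.filter (fun i => P i = P 0) := by simp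
    rw [← Finset.add_sum_erase _ v h0mem, hv0]
    have h1 : ∑ i ∈ (univ.filter (fun i => P i = P 0)).erase 0, v i ≤ 0 :=
      Finset.sum_nonpos (fun i _ => hv i)
    linarith
  have hsumall : ∑ i, v i = -(2 * (k : ℝ)) := by
    have hsp := Finset.sum_filter_add_sum_filter_not univ (fun i : Fin (k+1) => i.val = 0) v
    have h1 : univ.filter (fun i : Fin (k+1) => i.val = 0) = {(0 : Fin (k+1))} := by
      ext i
      simp only [mem_filter, mem_univ, true_and, mem_singleton, Fin.ext_iff, Fin.val_zero]
    rw [h1] at hsp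
    have h2 : (univ.filter (fun i : Fin (k+1) => ¬ i.val = 0)) =
        (univ.filter (fun i : Fin (k+1) => i.val ≠ 0)) := rfl
    rw [h2, hsumne, Finset.sum_singleton, hv0] at hsp
    rw [← hsp]
    ring
  refine ⟨?_, ?_, ?_⟩
  · intro j
    refine hMMS.trans ?_
    by_cases h0 : j.val = 0
    · rw [hb0 j h0, Finset.sum_singleton, hv0]
    by_cases h1 : j.val = 1
    · rw [hb1 j h1, hsumne]
    · rw [hbother j h0 h1, Finset.sum_empty]
      have : (0:ℝ) ≤ (k:ℝ) := by positivity
      linarith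
  · intro S hS hcS
    rw [hsumdiff S hS, hbother ⟨2, by omega⟩ (by simp) (by simp), Finset.sum_empty]
    have h2 : 0 < k - S.card := by omega
    have h3 : (0:ℝ) < ((k - S.card : ℕ) : ℝ) := by exact_mod_cast h2
    linarith
  · intro S hS hcS
    rw [hsumdiff S hS, hsumall]
    have hn0 : (0:ℝ) < (n:ℝ) := by exact_mod_cast (show 0 < n by omega)
    rw [lt_div_iff₀ hn0]
    have h2 : 2 * k < (k - S.card) * n := by
      have ha : 2*c+3 ≤ k - S.card := by omega
      have hb := Nat.mul_le_mul ha hn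
      omega
    have h3 : (2 * (k:ℝ)) < ((k - S.card : ℕ) : ℝ) * (n : ℝ) := by exact_mod_cast h2
    linarith
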